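/- The number of regions of the threshold arrangement in R^n (hyperplanes x_i + x_j = 0 for 1 ≤ i < j ≤ n, n ≥ 2) is 2·(a(n) − n·a(n−1)), where a(n) is the n-th Fubini (ordered Bell) number, the number of ordered set partitions of [n]. -/

import Mathlib

namespace TA

variable {n : ℕ}

/-- fiber of a block-index function -/
def fib (c : Fin n → ℕ) (k : ℕ) : Finset (Fin n) :=
  Finset.univ.filter (fun i => c i = k)

/-- "down-closed": no gaps in the range -/
def DC (c : Fin n → ℕ) : Prop := ∀ k, (fib c (k+1)).Nonempty → (fib c k).Nonempty

def Canonical (c : Fin n → ℕ) : Prop :=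
  DC c ∧ 2 ≤ (fib c (Finset.univ.sup c)).card

def alt (δ : Bool) (k : ℕ) : Bool := if k % 2 = 0 then δ else !δ

lemma alt_succ (δ : Bool) (k : ℕ) : alt δ (k+1) = !(alt δ k) := by
  rcases Nat.even_or_odd k with h | h
  · have h0 : k % 2 = 0 := Nat.even_iff.mp h
    have h1 : (k+1) % 2 = 1 := by omega
    simp [alt, h0, h1]
  · have h0 : k % 2 = 1 := Nat.odd_iff.mp h
    have h1 : (k+1) % 2 = 0 := by omega
    simp [alt, h0, h1]

lemma alt_ne_succ (δ : Bool) (k : ℕ) : alt δ (k+1) ≠ alt δ k := by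
  rw [alt_succ]; cases alt δ k <;> simp

lemma alt_inj {δ δ' : Bool} {k : ℕ} (h : alt δ k = alt δ' k) : δ = δ' := by
  unfold alt at h; split at h <;> simpa using h

lemma mem_fib {c : Fin n → ℕ} {k : ℕ} {i : Fin n} : i ∈ fib c k ↔ c i = k := by
  simp [fib]

lemma dc_le_nonempty {c : Fin n → ℕ} (hc : DC c) :
    ∀ (k : ℕ), (fib c k).Nonempty → ∀ m ≤ k, (fib c m).Nonempty := by
  intro k
  induction k with
  | zero => intro h m hm; simpa [Nat.le_zero.mp hm] using h
  | succ k ih =>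
      intro h m hm
      rcases Nat.eq_or_lt_of_le hm with rfl | hlt
      · exact h
      · exact ih (hc k h) m (by omega)

end TA
namespace TA
variable {n : ℕ}

def colN (k a : ℕ) : ℕ := if a ≤ k then a else a - 1

lemma colN_min (k a b : ℕ) : colN k (min a b) = min (colN k a) (colN k b) := by
  rcases le_total a b with h | h
  · have h2 : colN k a ≤ colN k b := by unfold colN; split <;> split <;> omega
    rw [min_eq_left h, min_eq_left h2]
  · have h2 : colN k b ≤ colN k a := by unfold colN; split <;> split <;> omega
    rw [min_eq_right h, min_eq_right h2]

lemma collapse_spec {c : Fin n → ℕ} {s : ℕ → Bool} {k : ℕ}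
    (h : fib c k = ∅ ∨ s k = s (k+1)) (i j : Fin n) :
    (fun t => if t < k then s t else s (t+1)) (min (colN k (c i)) (colN k (c j)))
      = s (min (c i) (c j)) := by
  rw [← colN_min]
  set a := min (c i) (c j) with ha
  have hmem : a = c i ∨ a = c j := min_cases (c i) (c j) |>.imp (fun h => h.1) (fun h => h.1)
  rcases lt_trichotomy a k with h1 | rfl | h1
  · have : colN k a = a := by unfold colN; split <;> omega
    rw [this]; simp [h1]
  · rcases h with h | h
    · exfalso
      rcases hmem with h2 | h2
      · exact absurd (mem_fib.mpr h2.symm) (by simp [h])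
      · exact absurd (mem_fib.mpr h2.symm) (by simp [h])
    · have : colN a a = a := by simp [colN]
      rw [this]; simp [h]
  · have : colN k a = a - 1 := by unfold colN; split <;> omega
    rw [this]
    have h2 : ¬ (a - 1 < k) := by omega
    have h3 : a - 1 + 1 = a := by omega
    simp [h2, h3]

lemma collapse_sup_le {c : Fin n → ℕ} {k N : ℕ} (hw : ∃ i, k < c i)
    (hs : Finset.univ.sup c ≤ N + 1) :
    Finset.univ.sup (fun i => colN k (c i)) ≤ N := by
  apply Finset.sup_le
  intro i _
  obtain ⟨w, hwk⟩ := hw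
  have hwN : c w ≤ N + 1 := Finset.le_sup (Finset.mem_univ w) |>.trans hs
  have hiN : c i ≤ N + 1 := Finset.le_sup (Finset.mem_univ i) |>.trans hs
  unfold colN; split <;> omega

lemma r3_min {c : Fin n → ℕ} (hcard : (fib c (Finset.univ.sup c)).card = 1)
    {i j : Fin n} (hij : i ≠ j) :
    min (min (c i) (Finset.univ.sup c - 1)) (min (c j) (Finset.univ.sup c - 1))
      = min (c i) (c j) := by
  set M := Finset.univ.sup c with hM
  have hi : c i ≤ M := Finset.le_sup (Finset.mem_univ i)
  have hj : c j ≤ M := Finset.le_sup (Finset.mem_univ j)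
  have hnot : ¬ (c i = M ∧ c j = M) := by
    rintro ⟨h1, h2⟩
    obtain ⟨a, ha⟩ := Finset.card_eq_one.mp hcard
    have e1 : i ∈ fib c M := mem_fib.mpr h1
    have e2 : j ∈ fib c M := mem_fib.mpr h2
    rw [ha, Finset.mem_singleton] at e1 e2
    exact hij (e1.trans e2.symm)
  omega

end TA
namespace TA
variable {n : ℕ}

lemma fib_sup_nonempty (hn : 1 ≤ n) (c : Fin n → ℕ) :
    (fib c (Finset.univ.sup c)).Nonempty := by
  have hne : (Finset.univ : Finset (Fin n)).Nonempty := by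
    refine ⟨⟨0, by omega⟩, Finset.mem_univ _⟩
  obtain ⟨i, _, hi⟩ := Finset.exists_mem_eq_sup Finset.univ hne c
  exact ⟨i, mem_fib.mpr hi.symm⟩

lemma canon_exists (hn : 2 ≤ n) :
    ∀ N (c : Fin n → ℕ), Finset.univ.sup c ≤ N → ∀ s : ℕ → Bool,
    ∃ (δ : Bool) (c₀ : Fin n → ℕ), Canonical c₀ ∧
      ∀ i j : Fin n, i ≠ j →
        s (min (c i) (c j)) = alt δ (min (c₀ i) (c₀ j)) := by
  intro N
  induction N with
  | zero =>
      intro c hsup s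
      refine ⟨s 0, fun _ => 0, ⟨?_, ?_⟩, ?_⟩
      · intro k ⟨i, hi⟩
        rw [mem_fib] at hi; omega
      · have h1 : Finset.univ.sup (fun (_ : Fin n) => (0:ℕ)) = 0 := by
          simp
        rw [h1]
        have : fib (fun (_ : Fin n) => (0:ℕ)) 0 = Finset.univ := by
          ext i; simp [mem_fib]
        rw [this, Finset.card_univ, Fintype.card_fin]; omega
      · intro i j _
        have hi : c i = 0 := by
          have := (Finset.le_sup (Finset.mem_univ i)).trans hsup; omega
        have hj : c j = 0 := by
          have := (Finset.le_sup (Finset.mem_univ j)).trans hsup; omega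
        simp [hi, hj, alt]
  | succ N ih =>
      intro c hsup s
      by_cases hN : Finset.univ.sup c ≤ N
      · exact ih c hN s
      -- reduction 1 & 2: collapse at k
      by_cases h1 : ∃ k, (fib c (k+1)).Nonempty ∧ (fib c k = ∅ ∨ s k = s (k+1))
      · obtain ⟨k, hk1, hk2⟩ := h1
        obtain ⟨w, hw⟩ := hk1
        rw [mem_fib] at hw
        have hwit : ∃ i, k < c i := ⟨w, by omega⟩
        obtain ⟨δ, c₀, hcan, heq⟩ :=
          ih (fun i => colN k (c i)) (collapse_sup_le hwit hsup)
            (fun t => if t < k then s t else s (t+1))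
        refine ⟨δ, c₀, hcan, fun i j hij => ?_⟩
        rw [← heq i j hij]
        exact (collapse_spec hk2 i j).symm
      push_neg at h1
      have hdc : DC c := by
        intro k hk
        rcases Finset.eq_empty_or_nonempty (fib c k) with he | hne
        · exact absurd he (h1 k hk).1.ne_empty
        · exact hne
      -- reduction 3: singleton top fiber
      by_cases h3 : (fib c (Finset.univ.sup c)).card = 1
      · set M := Finset.univ.sup c with hM
        have hM1 : 1 ≤ M := by omega
        obtain ⟨δ, c₀, hcan, heq⟩ :=
          ih (fun i => min (c i) (M - 1)) (by
            apply Finset.sup_le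
            intro i _
            have := Finset.le_sup (f := c) (Finset.mem_univ i)
            omega) s
        refine ⟨δ, c₀, hcan, fun i j hij => ?_⟩
        rw [← heq i j hij, r3_min h3 hij]
      -- terminal
      · have hfs := fib_sup_nonempty (by omega) c
        have hcard : 2 ≤ (fib c (Finset.univ.sup c)).card := by
          have := Finset.card_pos.mpr hfs; omega
        have halt : ∀ a ≤ Finset.univ.sup c, s a = alt (s 0) a := by
          intro a
          induction a with
          | zero => intro _; simp [alt]
          | succ a iha =>
              intro ha
              have hne : (fib c (a+1)).Nonempty :=
                dc_le_nonempty hdc _ hfs (a+1) ha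
              have hs : s a ≠ s (a+1) := by
                intro h; exact (h1 a hne).2 h
              have : s (a+1) = !(s a) := by
                cases hsa : s a <;> cases hsa1 : s (a+1) <;> simp_all
              rw [this, iha (by omega), alt_succ]
        refine ⟨s 0, c, ⟨hdc, hcard⟩, fun i j _ => ?_⟩
        apply halt
        exact le_trans (min_le_left _ _) (Finset.le_sup (Finset.mem_univ i))

end TA
namespace TA
variable {n : ℕ}

lemma rowne {c : Fin n → ℕ} (hc : Canonical c) {k : ℕ} {i : Fin n}
    (hi : k + 1 ≤ c i) :
    ∃ j j' : Fin n, j ≠ i ∧ j' ≠ i ∧ k ≤ c j ∧ k ≤ c j' ∧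
      min (c i) (c j) = k ∧ min (c i) (c j') = k + 1 := by
  have hfibi : (fib c (c i)).Nonempty := ⟨i, mem_fib.mpr rfl⟩
  obtain ⟨j, hj⟩ := dc_le_nonempty hc.1 (c i) hfibi k (by omega)
  rw [mem_fib] at hj
  have hjne : j ≠ i := fun he => by rw [he] at hj; omega
  have hc2 := hc.2
  have hsupne : (fib c (Finset.univ.sup c)).Nonempty :=
    Finset.card_pos.mp (by omega)
  obtain ⟨w, hw⟩ := dc_le_nonempty hc.1 (c i) hfibi (k+1) hi
  rw [mem_fib] at hw
  by_cases hwi : w ≠ i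
  · refine ⟨j, w, hjne, hwi, by omega, by omega, ?_, ?_⟩
    · rw [min_eq_right (show c j ≤ c i by omega)]; omega
    · rw [min_eq_right (show c w ≤ c i by omega)]; omega
  · push_neg at hwi
    subst hwi
    -- c w = k + 1, the only element of fib (k+1) might be w = i; find one in fib (k+2)
    have hsub : k + 1 ≤ Finset.univ.sup c := hw ▸ Finset.le_sup (Finset.mem_univ w)
    rcases Nat.eq_or_lt_of_le hsub with heq | hlt
    · -- sup = k+1; top fiber has ≥ 2 elements, so there is another elt with value k+1
      have h2 := hc.2
      rw [← heq] at h2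
      obtain ⟨w', hw', hww'⟩ :=
        Finset.exists_mem_ne (s := fib c (k+1)) (by omega) w
      rw [mem_fib] at hw'
      refine ⟨j, w', hjne, hww', by omega, by omega, ?_, ?_⟩
      · rw [min_eq_right (show c j ≤ c w by omega)]; omega
      · rw [min_eq_right (show c w' ≤ c w by omega)]; omega
    · obtain ⟨w', hw'⟩ := dc_le_nonempty hc.1 _ hsupne (k+2) hlt
      rw [mem_fib] at hw'
      have : w' ≠ w := fun he => by rw [he] at hw'; omega
      refine ⟨j, w', hjne, this, by omega, by omega, ?_, ?_⟩
      · rw [min_eq_right (show c j ≤ c w by omega)]; omega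
      · rw [min_eq_left (show c w ≤ c w' by omega)]; omega

lemma canon_inj_step {c c' : Fin n → ℕ} {δ δ' : Bool}
    (hc : Canonical c)
    (h : ∀ i j : Fin n, i ≠ j → alt δ (min (c i) (c j)) = alt δ' (min (c' i) (c' j)))
    (k : ℕ) (ihk : ∀ i, k ≤ c i ↔ k ≤ c' i) :
    ∀ i, k + 1 ≤ c i → k + 1 ≤ c' i := by
  intro i hi
  have hk' : k ≤ c' i := (ihk i).1 (by omega)
  by_contra hcon
  have hci' : c' i = k := by omega
  obtain ⟨j, j', hj, hj', hkj, hkj', hmin, hmin'⟩ := rowne hc hi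
  have hkcj' : k ≤ c' j := (ihk j).1 hkj
  have hkcj'2 : k ≤ c' j' := (ihk j').1 hkj'
  have e1 := h i j (Ne.symm hj)
  have e2 := h i j' (Ne.symm hj')
  rw [hmin] at e1
  rw [hmin'] at e2
  have m1 : min (c' i) (c' j) = k := by
    rw [min_eq_left (show c' i ≤ c' j by omega)]; omega
  have m2 : min (c' i) (c' j') = k := by
    rw [min_eq_left (show c' i ≤ c' j' by omega)]; omega
  rw [m1] at e1
  rw [m2] at e2
  exact alt_ne_succ δ k (e2.trans e1.symm)

lemma canon_inj (hn : 2 ≤ n) {c c' : Fin n → ℕ} {δ δ' : Bool}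
    (hc : Canonical c) (hc' : Canonical c')
    (h : ∀ i j : Fin n, i ≠ j → alt δ (min (c i) (c j)) = alt δ' (min (c' i) (c' j))) :
    δ = δ' ∧ c = c' := by
  have hsym : ∀ i j : Fin n, i ≠ j →
      alt δ' (min (c' i) (c' j)) = alt δ (min (c i) (c j)) :=
    fun i j hij => (h i j hij).symm
  have hU : ∀ k, ∀ i, k ≤ c i ↔ k ≤ c' i := by
    intro k
    induction k with
    | zero => intro i; simp
    | succ k ihk =>
        intro i
        constructor
        · exact canon_inj_step hc h k ihk i
        · exact canon_inj_step hc' hsym k (fun i => (ihk i).symm) i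
  have hcc : c = c' := by
    funext i
    have h1 := (hU (c i) i).1 le_rfl
    have h2 := (hU (c' i) i).2 le_rfl
    omega
  subst hcc
  refine ⟨?_, rfl⟩
  have hij : (⟨0, by omega⟩ : Fin n) ≠ ⟨1, by omega⟩ :=
    by simp [Fin.ext_iff]
  exact alt_inj (h _ _ hij)

end TA
namespace TA
variable {n : ℕ}

def Sarr (n : ℕ) : Set (Fin n → ℝ) := {y | ∀ i j : Fin n, i < j → y i + y j ≠ 0}

def chamber (x : Fin n → ℝ) : Set (Fin n → ℝ) :=
  {y | ∀ i j : Fin n, i < j →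
    ((0 < x i + x j → 0 < y i + y j) ∧ (x i + x j < 0 → y i + y j < 0))}

lemma chamber_convex (x : Fin n → ℝ) : Convex ℝ (chamber x) := by
  intro y hy z hz a b ha hb hab
  have key : ∀ p q : ℝ, 0 < p → 0 < q → 0 < a * p + b * q := by
    intro p q hp hq
    rcases eq_or_lt_of_le ha with he | ha'
    · rw [← he, zero_mul, zero_add, show b = 1 by linarith, one_mul]
      exact hq
    · have e1 : 0 < a * p := mul_pos ha' hp
      have e2 : 0 ≤ b * q := mul_nonneg hb hq.le
      linarith
  intro i j hij
  have h1 := hy i j hij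
  have h2 := hz i j hij
  constructor
  · intro hp
    have e1 := h1.1 hp
    have e2 := h2.1 hp
    have := key _ _ e1 e2
    simp only [Pi.add_apply, Pi.smul_apply, smul_eq_mul]
    linarith
  · intro hp
    have e1 := h1.2 hp
    have e2 := h2.2 hp
    have := key _ _ (by linarith : (0:ℝ) < -(y i + y j)) (by linarith : (0:ℝ) < -(z i + z j))
    simp only [Pi.add_apply, Pi.smul_apply, smul_eq_mul]
    linarith

lemma mem_chamber_self {x : Fin n → ℝ} : x ∈ chamber x :=
  fun _ _ _ => ⟨id, id⟩

lemma chamber_subset {x : Fin n → ℝ} (hx : x ∈ Sarr n) : chamber x ⊆ Sarr n := by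
  intro y hy i j hij
  have h1 := hy i j hij
  rcases lt_trichotomy (x i + x j) 0 with h | h | h
  · exact ne_of_lt (h1.2 h)
  · exact absurd h (hx i j hij)
  · exact ne_of_gt (h1.1 h)

lemma comp_eq_chamber {x : Fin n → ℝ} (hx : x ∈ Sarr n) :
    connectedComponentIn (Sarr n) x = chamber x := by
  apply le_antisymm
  · intro y hy
    have hT : IsPreconnected (connectedComponentIn (Sarr n) x) :=
      isPreconnected_connectedComponentIn
    have hTS : connectedComponentIn (Sarr n) x ⊆ Sarr n :=
      connectedComponentIn_subset _ _
    have hxT : x ∈ connectedComponentIn (Sarr n) x :=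
      mem_connectedComponentIn hx
    intro i j hij
    have hf : Continuous (fun z : Fin n → ℝ => z i + z j) :=
      (continuous_apply i).add (continuous_apply j)
    constructor
    · intro hp
      by_contra hcon
      push_neg at hcon
      obtain ⟨z, hz, hz0⟩ := hT.intermediate_value₂ hy hxT
        (hf.continuousOn) (continuousOn_const (c := (0:ℝ)))
        hcon (le_of_lt hp)
      exact hTS hz i j hij hz0
    · intro hp
      by_contra hcon
      push_neg at hcon
      obtain ⟨z, hz, hz0⟩ := hT.intermediate_value₂ hxT hy
        (hf.continuousOn) (continuousOn_const (c := (0:ℝ)))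
        (le_of_lt hp) hcon
      exact hTS hz i j hij hz0
  · exact (chamber_convex x).isPreconnected.subset_connectedComponentIn
      mem_chamber_self (chamber_subset hx)

lemma sign_lemma {a b : ℝ} (h : |b| < |a|) : 0 < a + b ↔ 0 < a := by
  rcases abs_cases a with ⟨h1, h2⟩ | ⟨h1, h2⟩ <;>
    rcases abs_cases b with ⟨h3, h4⟩ | ⟨h3, h4⟩ <;>
      constructor <;> intro <;> linarith

end TA
namespace TA
variable {n : ℕ}

noncomputable def pt (δ : Bool) (c : Fin n → ℕ) : Fin n → ℝ :=
  fun i => (if alt δ (c i) then 1 else -1) * (2:ℝ)⁻¹ ^ (c i)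

lemma pt_abs (δ : Bool) (c : Fin n → ℕ) (i : Fin n) :
    |pt δ c i| = (2:ℝ)⁻¹ ^ (c i) := by
  unfold pt
  rw [abs_mul, abs_pow]
  have : |(2:ℝ)⁻¹| = (2:ℝ)⁻¹ := abs_of_pos (by norm_num)
  split <;> simp [this]

lemma mag_anti {a b : ℕ} (h : a < b) : (2:ℝ)⁻¹ ^ b < (2:ℝ)⁻¹ ^ a :=
  pow_lt_pow_right_of_lt_one₀ (by norm_num) (by norm_num) h

lemma mag_pos (a : ℕ) : (0:ℝ) < (2:ℝ)⁻¹ ^ a := by positivity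

lemma pt_pos_iff (δ : Bool) (c : Fin n → ℕ) (i : Fin n) :
    0 < pt δ c i ↔ alt δ (c i) = true := by
  unfold pt
  split <;> rename_i h
  · simpa [h] using mag_pos (c i)
  · simp only [h]
    constructor
    · intro hcon
      nlinarith [mag_pos (c i)]
    · intro hcon
      exact absurd hcon (by simp)
  

lemma pt_eq_of_eq {δ : Bool} {c : Fin n → ℕ} {i j : Fin n} (h : c i = c j) :
    pt δ c i = pt δ c j := by unfold pt; rw [h]

lemma pt_sign (δ : Bool) (c : Fin n → ℕ) (i j : Fin n) :
    (0 < pt δ c i + pt δ c j ↔ alt δ (min (c i) (c j)) = true) := by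
  rcases lt_trichotomy (c i) (c j) with h | h | h
  · have habs : |pt δ c j| < |pt δ c i| := by
      rw [pt_abs, pt_abs]; exact mag_anti h
    rw [sign_lemma habs, min_eq_left h.le, pt_pos_iff]
  · rw [min_eq_left h.le, ← pt_pos_iff δ c i]
    have he := pt_eq_of_eq (δ := δ) h
    constructor <;> intro hh
    · nlinarith
    · nlinarith
  · have habs : |pt δ c i| < |pt δ c j| := by
      rw [pt_abs, pt_abs]; exact mag_anti h
    rw [add_comm, sign_lemma habs, min_eq_right h.le, pt_pos_iff]

lemma pt_mem (δ : Bool) (c : Fin n → ℕ) : pt δ c ∈ Sarr n := by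
  intro i j _
  rcases eq_or_ne (c i) (c j) with h | h
  · have he := pt_eq_of_eq (δ := δ) h
    have := pt_pos_iff δ c i
    intro hcon
    rcases lt_trichotomy (0:ℝ) (pt δ c i) with hp | hp | hp
    · nlinarith
    · exact absurd (mag_pos (c i)) (by rw [← pt_abs δ c i, ← hp]; simp)
    · nlinarith
  · have : |pt δ c i| ≠ |pt δ c j| := by
      rw [pt_abs, pt_abs]
      rcases h.lt_or_gt with hh | hh
      · exact ne_of_gt (mag_anti hh)
      · exact ne_of_lt (mag_anti hh)
    intro hcon
    apply this
    rw [show pt δ c i = -pt δ c j by linarith, abs_neg]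

end TA
namespace TA
variable {n : ℕ}

open Classical in
lemma real_canon {x : Fin n → ℝ} (hx : x ∈ Sarr n) :
    ∃ (c : Fin n → ℕ) (s : ℕ → Bool), ∀ i j : Fin n, i ≠ j →
      (0 < x i + x j ↔ s (min (c i) (c j)) = true) := by
  have hne : ∀ i j : Fin n, i ≠ j → x i + x j ≠ 0 := by
    intro i j hij
    rcases hij.lt_or_gt with h | h
    · exact hx i j h
    · rw [add_comm]; exact hx j i h
  have habs : ∀ i j : Fin n, i ≠ j → |x i| = |x j| → x i = x j := by
    intro i j hij h
    rcases abs_eq_abs.mp h with h | h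
    · exact h
    · exact absurd (by linarith : x i + x j = 0) (hne i j hij)
  set T : Finset ℝ := Finset.image (fun i => |x i|) Finset.univ with hT
  set c : Fin n → ℕ := fun i => (T.filter (fun v => |x i| < v)).card with hc
  have keylt : ∀ i j : Fin n, |x i| < |x j| → c j < c i := by
    intro i j h
    apply Finset.card_lt_card
    rw [Finset.ssubset_iff_of_subset]
    · exact ⟨|x j|, by
        simp only [Finset.mem_filter, hT, Finset.mem_image]
        exact ⟨⟨⟨j, Finset.mem_univ j, rfl⟩, h⟩, by simp⟩⟩
    · intro v hv
      simp only [Finset.mem_filter] at hv ⊢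
      exact ⟨hv.1, lt_trans h hv.2⟩
  have keyeq : ∀ i j : Fin n, |x i| = |x j| → c i = c j := by
    intro i j h
    simp only [hc, h]
  have ranklt : ∀ i j : Fin n, c i < c j ↔ |x j| < |x i| := by
    intro i j
    constructor
    · intro h
      rcases lt_trichotomy (|x i|) (|x j|) with hh | hh | hh
      · exact absurd h (by have := keylt i j hh; omega)
      · exact absurd h (by have := keyeq i j hh; omega)
      · exact hh
    · exact keylt j i
  have rankeq : ∀ i j : Fin n, c i = c j → |x i| = |x j| := by
    intro i j h
    rcases lt_trichotomy (|x i|) (|x j|) with hh | hh | hh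
    · exact absurd h (by have := keylt i j hh; omega)
    · exact hh
    · exact absurd h (by have := keylt j i hh; omega)
  refine ⟨c, fun k => decide (∃ i, c i = k ∧ 0 < x i), ?_⟩
  have sval : ∀ i : Fin n, (decide (∃ k, c k = c i ∧ 0 < x k) = true ↔ 0 < x i) := by
    intro i
    rw [decide_eq_true_iff]
    constructor
    · rintro ⟨k, hk1, hk2⟩
      rcases eq_or_ne k i with rfl | hki
      · exact hk2
      · rwa [habs k i hki (rankeq k i hk1)] at hk2
    · intro h; exact ⟨i, rfl, h⟩
  intro i j hij
  rcases lt_trichotomy (c i) (c j) with h | h | h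
  · rw [min_eq_left h.le, sign_lemma ((ranklt i j).mp h), sval i]
  · have hxij : x j = x i := (habs i j hij (rankeq i j h)).symm
    rw [min_eq_left h.le, sval i, hxij]
    constructor <;> intro <;> linarith
  · rw [min_eq_right h.le, add_comm, sign_lemma ((ranklt j i).mp h), sval j]

end TA
namespace TA
variable {n : ℕ}

lemma chamber_eq_of_sign {x y : Fin n → ℝ} (hx : x ∈ Sarr n) (hy : y ∈ Sarr n)
    (h : ∀ i j : Fin n, i < j → (0 < x i + x j ↔ 0 < y i + y j)) :
    chamber x = chamber y := by
  have hneg : ∀ i j : Fin n, i < j → (x i + x j < 0 ↔ y i + y j < 0) := by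
    intro i j hij
    have h1 := hx i j hij
    have h2 := hy i j hij
    have h3 := h i j hij
    constructor
    · intro hp
      rcases lt_trichotomy (y i + y j) 0 with hh | hh | hh
      · exact hh
      · exact absurd hh h2
      · exact absurd (h3.mpr hh) (by linarith)
    · intro hp
      rcases lt_trichotomy (x i + x j) 0 with hh | hh | hh
      · exact hh
      · exact absurd hh h1
      · exact absurd (h3.mp hh) (by linarith)
  ext z
  constructor
  · intro hz i j hij
    exact ⟨fun hp => (hz i j hij).1 ((h i j hij).mpr hp),
           fun hp => (hz i j hij).2 ((hneg i j hij).mpr hp)⟩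
  · intro hz i j hij
    exact ⟨fun hp => (hz i j hij).1 ((h i j hij).mp hp),
           fun hp => (hz i j hij).2 ((hneg i j hij).mp hp)⟩

abbrev Gsub (n : ℕ) : Type := {c : Fin n → ℕ // Canonical c}

noncomputable def Phi (n : ℕ) : Bool × Gsub n → Set (Fin n → ℝ) :=
  fun p => connectedComponentIn (Sarr n) (pt p.1 p.2.1)

lemma regions_eq_range (hn : 2 ≤ n) :
    {C : Set (Fin n → ℝ) | ∃ x ∈ Sarr n, C = connectedComponentIn (Sarr n) x}
      = Set.range (Phi n) := by
  ext C
  constructor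
  · rintro ⟨x, hx, rfl⟩
    obtain ⟨c, s, hcs⟩ := real_canon hx
    obtain ⟨δ, c₀, hcan, heq⟩ :=
      canon_exists hn (Finset.univ.sup c) c le_rfl s
    refine ⟨⟨δ, ⟨c₀, hcan⟩⟩, ?_⟩
    show connectedComponentIn (Sarr n) (pt δ c₀) = connectedComponentIn (Sarr n) x
    rw [comp_eq_chamber hx, comp_eq_chamber (pt_mem δ c₀)]
    apply chamber_eq_of_sign (pt_mem δ c₀) hx
    intro i j hij
    rw [pt_sign δ c₀ i j, hcs i j (ne_of_lt hij), ← heq i j (ne_of_lt hij)]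
  · rintro ⟨⟨δ, c, hcan⟩, rfl⟩
    exact ⟨pt δ c, pt_mem δ c, rfl⟩

lemma Phi_injective (hn : 2 ≤ n) : Function.Injective (Phi n) := by
  rintro ⟨δ, c, hc⟩ ⟨δ', c', hc'⟩ h
  unfold Phi at h
  simp only at h
  rw [comp_eq_chamber (pt_mem δ c), comp_eq_chamber (pt_mem δ' c')] at h
  have hsign : ∀ i j : Fin n, i ≠ j →
      alt δ (min (c i) (c j)) = alt δ' (min (c' i) (c' j)) := by
    have key : ∀ i j : Fin n, i < j →
        alt δ (min (c i) (c j)) = alt δ' (min (c' i) (c' j)) := by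
      intro i j hij
      have hmem : pt δ' c' ∈ chamber (pt δ c) := by
        rw [h]; exact mem_chamber_self
      have h1 := hmem i j hij
      have h2 := pt_sign δ c i j
      have h3 := pt_sign δ' c' i j
      have h4 := pt_mem δ c i j hij
      have h5 := pt_mem δ' c' i j hij
      rcases lt_trichotomy (pt δ c i + pt δ c j) 0 with hh | hh | hh
      · have hneg := h1.2 hh
        have e2 : alt δ (min (c i) (c j)) = false := by
          rcases Bool.eq_false_or_eq_true (alt δ (min (c i) (c j))) with hb | hb
          · exact absurd (h2.mpr hb) (by linarith)
          · exact hb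
        have e3 : alt δ' (min (c' i) (c' j)) = false := by
          rcases Bool.eq_false_or_eq_true (alt δ' (min (c' i) (c' j))) with hb | hb
          · exact absurd (h3.mpr hb) (by linarith)
          · exact hb
        rw [e2, e3]
      · exact absurd hh h4
      · have hpos := h1.1 hh
        rw [h2.mp hh, h3.mp hpos]
    intro i j hij
    rcases hij.lt_or_gt with hh | hh
    · exact key i j hh
    · rw [min_comm (c i) (c j), min_comm (c' i) (c' j)]
      exact key j i hh
  have := canon_inj hn hc hc' hsign
  simp only [Prod.mk.injEq, Subtype.mk.injEq]
  exact this

end TA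
namespace TA
variable {n : ℕ}

abbrev FT (n : ℕ) : Type := {c : Fin n → ℕ // DC c}

abbrev OPT (n : ℕ) : Type :=
  {L : List (Finset (Fin n)) //
    (∀ B ∈ L, B.Nonempty) ∧ L.Pairwise Disjoint ∧ L.foldr (· ∪ ·) ∅ = Finset.univ}

lemma mem_foldr_union {α : Type*} [DecidableEq α] (L : List (Finset α)) (i : α) :
    i ∈ L.foldr (· ∪ ·) ∅ ↔ ∃ B ∈ L, i ∈ B := by
  induction L with
  | nil => simp
  | cons B L ih => simp [ih]

def cOf (L : List (Finset (Fin n))) : Fin n → ℕ :=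
  fun i => L.findIdx (fun B => decide (i ∈ B))

section opf
variable {L : List (Finset (Fin n))}
  (hL : (∀ B ∈ L, B.Nonempty) ∧ L.Pairwise Disjoint ∧ L.foldr (· ∪ ·) ∅ = Finset.univ)
include hL

lemma cOf_lt (i : Fin n) : cOf L i < L.length := by
  rw [cOf, List.findIdx_lt_length]
  have h := (mem_foldr_union L i).mp (by rw [hL.2.2]; exact Finset.mem_univ i)
  obtain ⟨B, hB, hiB⟩ := h
  exact ⟨B, hB, by simp [hiB]⟩

lemma mem_get_cOf (i : Fin n) : i ∈ L[cOf L i]'(cOf_lt hL i) := by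
  have := List.findIdx_getElem (p := fun B => decide (i ∈ B)) (xs := L)
    (w := cOf_lt hL i)
  simp only [decide_eq_true_eq] at this
  exact this

lemma fib_cOf {k : ℕ} (hk : k < L.length) : fib (cOf L) k = L[k] := by
  ext i
  rw [mem_fib]
  constructor
  · rintro rfl
    exact mem_get_cOf hL i
  · intro hik
    by_contra hne
    have hmem := mem_get_cOf hL i
    have hdisj := List.pairwise_iff_getElem.mp hL.2.1
    rcases Nat.lt_or_ge (cOf L i) k with hh | hh
    · exact (Finset.disjoint_left.mp (hdisj _ _ (cOf_lt hL i) hk hh)) hmem hik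
    · have hh2 : k < cOf L i := by omega
      exact (Finset.disjoint_left.mp (hdisj _ _ hk (cOf_lt hL i) hh2)) hik hmem

lemma fib_cOf_empty {k : ℕ} (hk : L.length ≤ k) : fib (cOf L) k = ∅ := by
  ext i
  rw [mem_fib]
  simp only [Finset.notMem_empty, iff_false]
  have := cOf_lt hL i
  omega

lemma dc_cOf : DC (cOf L) := by
  intro k ⟨i, hi⟩
  rw [mem_fib] at hi
  have hlt : k + 1 < L.length := by have := cOf_lt hL i; omega
  have hk : k < L.length := by omega
  rw [fib_cOf hL hk]
  exact hL.1 _ (List.getElem_mem hk)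

lemma length_pos (hn : 1 ≤ n) : 0 < L.length := by
  have := cOf_lt hL ⟨0, by omega⟩
  omega

lemma sup_cOf (hn : 1 ≤ n) : Finset.univ.sup (cOf L) + 1 = L.length := by
  have h1 : Finset.univ.sup (cOf L) < L.length := by
    have hne : (Finset.univ : Finset (Fin n)).Nonempty := ⟨⟨0, by omega⟩, Finset.mem_univ _⟩
    obtain ⟨i, _, hi⟩ := Finset.exists_mem_eq_sup Finset.univ hne (cOf L)
    rw [hi]; exact cOf_lt hL i
  have h2 : L.length - 1 ≤ Finset.univ.sup (cOf L) := by
    have hlen := length_pos hL hn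
    have hne : (fib (cOf L) (L.length - 1)).Nonempty := by
      rw [fib_cOf hL (by omega)]
      exact hL.1 _ (List.getElem_mem (by omega))
    obtain ⟨i, hi⟩ := hne
    rw [mem_fib] at hi
    exact hi ▸ Finset.le_sup (Finset.mem_univ i)
  omega

end opf

def LOf (c : Fin n → ℕ) : List (Finset (Fin n)) :=
  (List.range (Finset.univ.sup c + 1)).map (fib c)

lemma LOf_length (c : Fin n → ℕ) : (LOf c).length = Finset.univ.sup c + 1 := by
  simp [LOf]

lemma LOf_get (c : Fin n → ℕ) {k : ℕ} (hk : k < (LOf c).length) :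
    (LOf c)[k] = fib c k := by
  simp [LOf]

lemma LOf_prop (hn : 1 ≤ n) {c : Fin n → ℕ} (hc : DC c) :
    (∀ B ∈ LOf c, B.Nonempty) ∧ (LOf c).Pairwise Disjoint ∧
      (LOf c).foldr (· ∪ ·) ∅ = Finset.univ := by
  refine ⟨?_, ?_, ?_⟩
  · intro B hB
    rw [LOf, List.mem_map] at hB
    obtain ⟨k, hk, rfl⟩ := hB
    rw [List.mem_range] at hk
    exact dc_le_nonempty hc _ (fib_sup_nonempty hn c) k (by omega)
  · rw [List.pairwise_iff_getElem]
    intro a b ha hb hab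
    rw [LOf_get c ha, LOf_get c hb]
    rw [Finset.disjoint_left]
    intro i hi1 hi2
    rw [mem_fib] at hi1 hi2
    omega
  · ext i
    simp only [Finset.mem_univ, iff_true]
    rw [mem_foldr_union]
    refine ⟨fib c (c i), ?_, mem_fib.mpr rfl⟩
    rw [LOf, List.mem_map]
    exact ⟨c i, by rw [List.mem_range]
                   exact Nat.lt_succ_of_le (Finset.le_sup (Finset.mem_univ i)), rfl⟩

noncomputable def equivOPF (hn : 1 ≤ n) : OPT n ≃ FT n where
  toFun L := ⟨cOf L.1, dc_cOf L.2⟩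
  invFun c := ⟨LOf c.1, LOf_prop hn c.2⟩
  left_inv := by
    rintro ⟨L, hL⟩
    apply Subtype.ext
    show LOf (cOf L) = L
    apply List.ext_getElem
    · rw [LOf_length, sup_cOf hL hn]
    · intro k h1 h2
      rw [LOf_get _ h1, fib_cOf hL h2]
  right_inv := by
    rintro ⟨c, hc⟩
    apply Subtype.ext
    show cOf (LOf c) = c
    funext i
    have hprop := LOf_prop hn hc
    have h1 : i ∈ fib (cOf (LOf c)) (cOf (LOf c) i) := mem_fib.mpr rfl
    rw [fib_cOf hprop (cOf_lt hprop i), LOf_get c (cOf_lt hprop i), mem_fib] at h1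
    exact h1.symm

end TA
namespace TA
variable {n : ℕ}

lemma dc_lt {c : Fin n → ℕ} (hc : DC c) (i : Fin n) : c i < n := by
  have hsub : Finset.range (c i + 1) ⊆ Finset.univ.image c := by
    intro k hk
    rw [Finset.mem_range] at hk
    obtain ⟨j, hj⟩ := dc_le_nonempty hc (c i) ⟨i, mem_fib.mpr rfl⟩ k (by omega)
    exact Finset.mem_image.mpr ⟨j, Finset.mem_univ j, mem_fib.mp hj⟩
  have h1 := Finset.card_le_card hsub
  have h2 := Finset.card_image_le (s := (Finset.univ : Finset (Fin n))) (f := c)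
  rw [Finset.card_range] at h1
  rw [Finset.card_univ, Fintype.card_fin] at h2
  omega

instance : Finite (FT n) := by
  apply Finite.of_injective (fun c : FT n => (fun i => (⟨c.1 i, dc_lt c.2 i⟩ : Fin n)))
  rintro ⟨c, hc⟩ ⟨c', hc'⟩ h
  apply Subtype.ext
  funext i
  have := congrFun h i
  simpa [Fin.ext_iff] using this

abbrev SgT (n : ℕ) : Type :=
  {c : Fin n → ℕ // DC c ∧ (fib c (Finset.univ.sup c)).card = 1}

noncomputable def splitEquiv (hn : 1 ≤ n) : FT n ≃ Gsub n ⊕ SgT n := by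
  classical
  refine (Equiv.sumCompl
    (fun x : FT n => 2 ≤ (fib x.1 (Finset.univ.sup x.1)).card)).symm.trans
    (Equiv.sumCongr ?_ ?_)
  · exact (Equiv.subtypeSubtypeEquivSubtypeInter (fun c : Fin n → ℕ => DC c)
      (fun c => 2 ≤ (fib c (Finset.univ.sup c)).card)).trans
      (Equiv.subtypeEquivRight (fun c => Iff.rfl))
  · refine (Equiv.subtypeSubtypeEquivSubtypeInter (fun c : Fin n → ℕ => DC c)
      (fun c => ¬ 2 ≤ (fib c (Finset.univ.sup c)).card)).trans
      (Equiv.subtypeEquivRight ?_)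
    intro c
    have h1 : (fib c (Finset.univ.sup c)).Nonempty := fib_sup_nonempty hn c
    have h2 := Finset.card_pos.mpr h1
    constructor
    · rintro ⟨hdc, hcard⟩; exact ⟨hdc, by omega⟩
    · rintro ⟨hdc, hcard⟩; exact ⟨hdc, by omega⟩

instance : Finite (Gsub n) :=
  Finite.of_injective (fun c : Gsub n => (⟨c.1, c.2.1⟩ : FT n))
    (fun a b h => Subtype.ext (congrArg (Subtype.val : FT n → _) h))

instance : Finite (SgT n) :=
  Finite.of_injective (fun c : SgT n => (⟨c.1, c.2.1⟩ : FT n))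
    (fun a b h => Subtype.ext (congrArg (Subtype.val : FT n → _) h))

lemma card_FT_split (hn : 1 ≤ n) :
    Nat.card (FT n) = Nat.card (Gsub n) + Nat.card (SgT n) := by
  rw [Nat.card_congr (splitEquiv hn), Nat.card_sum]

end TA
namespace TA

section sg
variable {m : ℕ}

noncomputable def unSq (i₀ : Fin (m+1)) (d : Fin m → ℕ) : Fin (m+1) → ℕ :=
  fun i => if h : i = i₀ then Finset.univ.sup d + 1
           else d (Classical.choose (Fin.exists_succAbove_eq h))

lemma unSq_at (i₀ : Fin (m+1)) (d : Fin m → ℕ) : unSq i₀ d i₀ = Finset.univ.sup d + 1 := by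
  simp [unSq]

lemma unSq_other (i₀ : Fin (m+1)) (d : Fin m → ℕ) {i : Fin (m+1)} (h : i ≠ i₀) :
    ∃ j : Fin m, i₀.succAbove j = i ∧ unSq i₀ d i = d j := by
  refine ⟨Classical.choose (Fin.exists_succAbove_eq h),
    Classical.choose_spec (Fin.exists_succAbove_eq h), ?_⟩
  simp [unSq, h]

lemma unSq_comp (i₀ : Fin (m+1)) (d : Fin m → ℕ) (j : Fin m) :
    unSq i₀ d (i₀.succAbove j) = d j := by
  have hne : i₀.succAbove j ≠ i₀ := Fin.succAbove_ne i₀ j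
  obtain ⟨j', hj'1, hj'2⟩ := unSq_other i₀ d hne
  rw [hj'2, Fin.succAbove_right_injective hj'1]

lemma unSq_le (i₀ : Fin (m+1)) (d : Fin m → ℕ) (i : Fin (m+1)) :
    unSq i₀ d i ≤ Finset.univ.sup d + 1 := by
  rcases eq_or_ne i i₀ with rfl | h
  · rw [unSq_at]
  · obtain ⟨j, _, hj⟩ := unSq_other i₀ d h
    rw [hj]
    exact (Finset.le_sup (Finset.mem_univ j)).trans (by omega)

lemma unSq_sup (i₀ : Fin (m+1)) (d : Fin m → ℕ) :
    Finset.univ.sup (unSq i₀ d) = Finset.univ.sup d + 1 := by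
  apply le_antisymm
  · exact Finset.sup_le (fun i _ => unSq_le i₀ d i)
  · rw [← unSq_at i₀ d]
    exact Finset.le_sup (Finset.mem_univ i₀)

lemma unSq_topfib (i₀ : Fin (m+1)) (d : Fin m → ℕ) :
    fib (unSq i₀ d) (Finset.univ.sup (unSq i₀ d)) = {i₀} := by
  rw [unSq_sup]
  ext i
  rw [mem_fib, Finset.mem_singleton]
  constructor
  · intro h
    by_contra hne
    obtain ⟨j, _, hj⟩ := unSq_other i₀ d hne
    rw [hj] at h
    have := Finset.le_sup (f := d) (Finset.mem_univ j)
    omega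
  · intro he
    rw [he]
    exact unSq_at i₀ d

lemma unSq_dc (hm : 1 ≤ m) (i₀ : Fin (m+1)) {d : Fin m → ℕ} (hd : DC d) :
    DC (unSq i₀ d) := by
  intro k ⟨i, hi⟩
  rw [mem_fib] at hi
  by_cases hk : k = Finset.univ.sup d
  · subst hk
    obtain ⟨j, hj⟩ := fib_sup_nonempty hm d
    rw [mem_fib] at hj
    exact ⟨i₀.succAbove j, mem_fib.mpr (by rw [unSq_comp]; exact hj)⟩
  · -- k + 1 ≠ sup d + 1, so the witness i is not i₀
    have hine : i ≠ i₀ := by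
      intro he
      rw [he, unSq_at] at hi
      omega
    obtain ⟨j, _, hj⟩ := unSq_other i₀ d hine
    rw [hj] at hi
    obtain ⟨j', hj'⟩ := hd k ⟨j, mem_fib.mpr hi⟩
    rw [mem_fib] at hj'
    exact ⟨i₀.succAbove j', mem_fib.mpr (by rw [unSq_comp]; exact hj')⟩

noncomputable def topIdx (c : Fin (m+1) → ℕ)
    (h : (fib c (Finset.univ.sup c)).card = 1) : Fin (m+1) :=
  (Finset.card_eq_one.mp h).choose

lemma topIdx_spec (c : Fin (m+1) → ℕ) (h : (fib c (Finset.univ.sup c)).card = 1) :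
    fib c (Finset.univ.sup c) = {topIdx c h} :=
  (Finset.card_eq_one.mp h).choose_spec

lemma topIdx_val (c : Fin (m+1) → ℕ) (h : (fib c (Finset.univ.sup c)).card = 1) :
    c (topIdx c h) = Finset.univ.sup c := by
  have := topIdx_spec c h
  have h2 : topIdx c h ∈ fib c (Finset.univ.sup c) := by
    rw [this]; exact Finset.mem_singleton_self _
  exact mem_fib.mp h2

lemma topIdx_lt (c : Fin (m+1) → ℕ) (h : (fib c (Finset.univ.sup c)).card = 1)
    {i : Fin (m+1)} (hi : i ≠ topIdx c h) : c i < Finset.univ.sup c := by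
  have h1 : c i ≤ Finset.univ.sup c := Finset.le_sup (Finset.mem_univ i)
  rcases Nat.eq_or_lt_of_le h1 with he | hlt
  · exfalso
    have : i ∈ fib c (Finset.univ.sup c) := mem_fib.mpr he
    rw [topIdx_spec c h, Finset.mem_singleton] at this
    exact hi this
  · exact hlt

lemma sg_sup_pos (hm : 1 ≤ m) {c : Fin (m+1) → ℕ}
    (h : (fib c (Finset.univ.sup c)).card = 1) : 1 ≤ Finset.univ.sup c := by
  by_contra hcon
  have h0 : Finset.univ.sup c = 0 := by omega
  have : fib c 0 = Finset.univ := by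
    ext i
    rw [mem_fib]
    have := Finset.le_sup (f := c) (Finset.mem_univ i)
    simp only [Finset.mem_univ, iff_true]
    omega
  rw [h0, this, Finset.card_univ, Fintype.card_fin] at h
  omega

lemma sg_dc_restrict (hm : 1 ≤ m) {c : Fin (m+1) → ℕ}
    (hdc : DC c) (h1 : (fib c (Finset.univ.sup c)).card = 1) :
    DC (c ∘ (topIdx c h1).succAbove) := by
  set i₀ := topIdx c h1
  intro k ⟨j, hj⟩
  rw [mem_fib] at hj
  simp only [Function.comp_apply] at hj
  have hlt : k + 1 < Finset.univ.sup c :=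
    hj ▸ topIdx_lt c h1 (Fin.succAbove_ne i₀ j)
  obtain ⟨w, hw⟩ := hdc k ⟨i₀.succAbove j, mem_fib.mpr hj⟩
  rw [mem_fib] at hw
  have hwne : w ≠ i₀ := by
    intro he
    rw [he, topIdx_val c h1] at hw
    omega
  obtain ⟨j', hj'⟩ := Fin.exists_succAbove_eq hwne
  exact ⟨j', mem_fib.mpr (by simp only [Function.comp_apply]; rw [hj']; exact hw)⟩

lemma sg_sup_restrict (hm : 1 ≤ m) {c : Fin (m+1) → ℕ}
    (hdc : DC c) (h1 : (fib c (Finset.univ.sup c)).card = 1) :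
    Finset.univ.sup (c ∘ (topIdx c h1).succAbove) + 1 = Finset.univ.sup c := by
  set i₀ := topIdx c h1
  set M := Finset.univ.sup c with hM
  have hM1 : 1 ≤ M := sg_sup_pos hm h1
  apply le_antisymm
  · have : ∀ j : Fin m, (c ∘ i₀.succAbove) j ≤ M - 1 := by
      intro j
      have := topIdx_lt c h1 (Fin.succAbove_ne i₀ j)
      simp only [Function.comp_apply]
      omega
    have h2 := Finset.sup_le (fun j (_ : j ∈ Finset.univ) => this j)
    omega
  · -- fib c (M-1) has an element ≠ i₀
    obtain ⟨w, hw⟩ := dc_le_nonempty hdc M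
      (by rw [topIdx_spec c h1]; exact ⟨i₀, Finset.mem_singleton_self _⟩) (M-1) (by omega)
    rw [mem_fib] at hw
    have hwne : w ≠ i₀ := by
      intro he
      rw [he, topIdx_val c h1] at hw
      omega
    obtain ⟨j, hj⟩ := Fin.exists_succAbove_eq hwne
    have : M - 1 ≤ Finset.univ.sup (c ∘ i₀.succAbove) := by
      have hmem : (c ∘ i₀.succAbove) j = M - 1 := by
        simp only [Function.comp_apply]; rw [hj]; exact hw
      exact hmem ▸ Finset.le_sup (Finset.mem_univ j)
    omega

noncomputable def sgEquiv (hm : 1 ≤ m) : SgT (m+1) ≃ Fin (m+1) × FT m where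
  toFun p := ⟨topIdx p.1 p.2.2, ⟨p.1 ∘ (topIdx p.1 p.2.2).succAbove,
    sg_dc_restrict hm p.2.1 p.2.2⟩⟩
  invFun q := ⟨unSq q.1 q.2.1, unSq_dc hm q.1 q.2.2, by
    rw [unSq_topfib]; exact Finset.card_singleton _⟩
  left_inv := by
    rintro ⟨c, hdc, h1⟩
    apply Subtype.ext
    show unSq (topIdx c h1) (c ∘ (topIdx c h1).succAbove) = c
    funext i
    set i₀ := topIdx c h1
    rcases eq_or_ne i i₀ with rfl | hne
    · rw [unSq_at, sg_sup_restrict hm hdc h1, topIdx_val c h1]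
    · obtain ⟨j, hj1, hj2⟩ := unSq_other i₀ (c ∘ i₀.succAbove) hne
      rw [hj2]
      simp only [Function.comp_apply]
      rw [hj1]
  right_inv := by
    rintro ⟨i₀, d, hd⟩
    have hcard : (fib (unSq i₀ d) (Finset.univ.sup (unSq i₀ d))).card = 1 := by
      rw [unSq_topfib]; exact Finset.card_singleton _
    have htop : topIdx (unSq i₀ d) hcard = i₀ := by
      have h1 := topIdx_spec (unSq i₀ d) hcard
      rw [unSq_topfib] at h1
      exact (Finset.singleton_injective h1.symm)
    simp only [Prod.mk.injEq]
    constructor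
    · exact htop
    · apply Subtype.ext
      show unSq i₀ d ∘ (topIdx (unSq i₀ d) hcard).succAbove = d
      rw [htop]
      funext j
      exact unSq_comp i₀ d j

end sg
end TA

/-- The `n`-th Fubini (ordered Bell) number: the number of ordered set partitions
of `{1, …, n}` into nonempty blocks. -/
noncomputable def orderedBell (n : ℕ) : ℕ :=
  Nat.card {L : List (Finset (Fin n)) //
    (∀ B ∈ L, B.Nonempty) ∧ L.Pairwise Disjoint ∧ L.foldr (· ∪ ·) ∅ = Finset.univ}

/-- The number of regions of the threshold arrangement in ℝⁿ
(hyperplanes `xᵢ + xⱼ = 0` for `i < j`, `n ≥ 2`) is `2·(a(n) − n·a(n−1))`,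
where `a` is the Fubini number. -/
theorem threshold_arrangement_regions (n : ℕ) (hn : 2 ≤ n) :
    Set.ncard {C : Set (Fin n → ℝ) |
      ∃ x ∈ {y : Fin n → ℝ | ∀ i j : Fin n, i < j → y i + y j ≠ 0},
      C = connectedComponentIn
        {y : Fin n → ℝ | ∀ i j : Fin n, i < j → y i + y j ≠ 0} x} =
    2 * (orderedBell n - n * orderedBell (n - 1)) := by
  obtain ⟨m, rfl⟩ : ∃ m, n = m + 2 := ⟨n - 2, by omega⟩
  have h21 : m + 2 - 1 = m + 1 := by omega
  rw [h21]
  -- region side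
  have hreg : {C : Set (Fin (m+2) → ℝ) |
      ∃ x ∈ TA.Sarr (m+2), C = connectedComponentIn (TA.Sarr (m+2)) x}
      = Set.range (TA.Phi (m+2)) := TA.regions_eq_range (by omega)
  show Set.ncard {C : Set (Fin (m+2) → ℝ) |
      ∃ x ∈ TA.Sarr (m+2), C = connectedComponentIn (TA.Sarr (m+2)) x} = _
  rw [hreg, ← Nat.card_coe_set_eq,
    Nat.card_congr (Equiv.ofInjective _ (TA.Phi_injective (by omega))).symm,
    Nat.card_prod]
  have hbool : Nat.card Bool = 2 := by
    rw [Nat.card_eq_fintype_card]; rfl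
  rw [hbool]
  -- counting side
  have hb1 : orderedBell (m+2) = Nat.card (TA.FT (m+2)) :=
    Nat.card_congr (TA.equivOPF (by omega))
  have hb2 : orderedBell (m+1) = Nat.card (TA.FT (m+1)) :=
    Nat.card_congr (TA.equivOPF (by omega))
  have hsplit := TA.card_FT_split (n := m+2) (by omega)
  have hsg : Nat.card (TA.SgT (m+2)) = (m+2) * Nat.card (TA.FT (m+1)) := by
    rw [Nat.card_congr (TA.sgEquiv (m := m+1) (by omega)), Nat.card_prod,
      Nat.card_eq_fintype_card, Fintype.card_fin]
  rw [hb1, hb2, hsplit, hsg]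
  generalize (m+2) * Nat.card (TA.FT (m+1)) = t
  omega
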